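/- For every prime m ≥ 3, there is a parity-oblivious qubit strategy with two-outcome projective measurements for the (2,m) parity-oblivious random exclusion code achieving success probability exactly (m−1)/m + 1/(m·√2); explicitly, take a(0) = −ẑ/√2, a(1) = ẑ/√2, a(l) = 0 for l ∉ {0,1}, b(0) = −x̂/√2, b(1) = x̂/√2, b(l) = 0 for l ∉ {0,1}, states ρ_{x_1 x_2} = (1/2)(I + (a(x_1)+b(x_2))·σ), and measurements M_{0|1} = (1/2)(I+σ_z), M_{1|1} = (1/2)(I−σ_z), M_{0|2} = (1/2)(I+σ_x), M_{1|2} = (1/2)(I−σ_x), with M_{b|y} = 0 for b ∉ {0,1}. -/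

import Mathlib

open Finset
open Matrix
open scoped ComplexOrder

noncomputable section

/-- Pauli matrix `σ_x`. -/
def sigmaX : Matrix (Fin 2) (Fin 2) ℂ := !![0, 1; 1, 0]

/-- Pauli matrix `σ_y`. -/
def sigmaY : Matrix (Fin 2) (Fin 2) ℂ := !![0, -Complex.I; Complex.I, 0]

/-- Pauli matrix `σ_z`. -/
def sigmaZ : Matrix (Fin 2) (Fin 2) ℂ := !![1, 0; 0, -1]

/-- `v·σ = v₁σ_x + v₂σ_y + v₃σ_z` for `v ∈ ℝ³`. -/
def dotSigma (v : EuclideanSpace ℝ (Fin 3)) : Matrix (Fin 2) (Fin 2) ℂ :=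
  v 0 • sigmaX + v 1 • sigmaY + v 2 • sigmaZ

/-- The single-digit Bloch components `a(0) = -ẑ/√2`, `a(1) = ẑ/√2`, `a(l) = 0` otherwise. -/
def aVec (m : ℕ) [NeZero m] : ZMod m → EuclideanSpace ℝ (Fin 3) := fun l =>
  if l = 0 then -((Real.sqrt 2)⁻¹ • EuclideanSpace.single (2 : Fin 3) (1 : ℝ))
  else if l = 1 then (Real.sqrt 2)⁻¹ • EuclideanSpace.single (2 : Fin 3) (1 : ℝ)
  else 0

/-- The single-digit Bloch components `b(0) = -x̂/√2`, `b(1) = x̂/√2`, `b(l) = 0` otherwise. -/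
def bVec (m : ℕ) [NeZero m] : ZMod m → EuclideanSpace ℝ (Fin 3) := fun l =>
  if l = 0 then -((Real.sqrt 2)⁻¹ • EuclideanSpace.single (0 : Fin 3) (1 : ℝ))
  else if l = 1 then (Real.sqrt 2)⁻¹ • EuclideanSpace.single (0 : Fin 3) (1 : ℝ)
  else 0

/-- The states `ρ_{x₁x₂} = (1/2)(I + (a(x₁) + b(x₂))·σ)`. -/
def porecState (m : ℕ) [NeZero m] (x₁ x₂ : ZMod m) : Matrix (Fin 2) (Fin 2) ℂ :=
  (1 / 2 : ℝ) • ((1 : Matrix (Fin 2) (Fin 2) ℂ) + dotSigma (aVec m x₁ + bVec m x₂))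

/-- The projective measurement for `y = 1`: `σ_z` projectors, other outcomes null. -/
def porecMeas₁ (m : ℕ) [NeZero m] (b : ZMod m) : Matrix (Fin 2) (Fin 2) ℂ :=
  if b = 0 then (1 / 2 : ℝ) • ((1 : Matrix (Fin 2) (Fin 2) ℂ) + sigmaZ)
  else if b = 1 then (1 / 2 : ℝ) • ((1 : Matrix (Fin 2) (Fin 2) ℂ) - sigmaZ)
  else 0

/-- The projective measurement for `y = 2`: `σ_x` projectors, other outcomes null. -/
def porecMeas₂ (m : ℕ) [NeZero m] (b : ZMod m) : Matrix (Fin 2) (Fin 2) ℂ :=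
  if b = 0 then (1 / 2 : ℝ) • ((1 : Matrix (Fin 2) (Fin 2) ℂ) + sigmaX)
  else if b = 1 then (1 / 2 : ℝ) • ((1 : Matrix (Fin 2) (Fin 2) ℂ) - sigmaX)
  else 0

lemma psd2 (a b c : ℝ) (ha : 0 ≤ a) (hc : 0 ≤ c) (h : b ^ 2 ≤ a * c) :
    (!![(a : ℂ), (b : ℝ); (b : ℝ), (c : ℝ)]).PosSemidef := by
  rw [Matrix.posSemidef_iff_dotProduct_mulVec]
  constructor
  · ext i j
    fin_cases i <;> fin_cases j <;> simp [Matrix.conjTranspose_apply]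
  · intro x
    have key : star x ⬝ᵥ ((!![(a : ℂ), (b : ℝ); (b : ℝ), (c : ℝ)]) *ᵥ x)
        = ((a * ‖x 0‖ ^ 2 + c * ‖x 1‖ ^ 2
            + 2 * b * ((starRingEnd ℂ) (x 0) * x 1).re : ℝ) : ℂ) := by
      simp only [dotProduct, Matrix.mulVec, Fin.sum_univ_two, Matrix.cons_val',
        Matrix.cons_val_zero, Matrix.cons_val_one, Matrix.head_cons, Matrix.head_fin_const,
        Pi.star_apply, RCLike.star_def, Matrix.empty_val', Matrix.cons_val_fin_one]
      apply Complex.ext <;>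
        simp [Complex.sq_norm, Complex.normSq_apply, Complex.add_re, Complex.add_im,
          Complex.mul_re, Complex.mul_im] <;> ring
    rw [key]
    rw [Complex.zero_le_real]
    set p := ‖x 0‖
    set q := ‖x 1‖
    set r := ((starRingEnd ℂ) (x 0) * x 1).re
    have hp : 0 ≤ p := norm_nonneg _
    have hq : 0 ≤ q := norm_nonneg _
    have habs : |r| ≤ p * q := by
      calc |r| ≤ ‖(starRingEnd ℂ) (x 0) * x 1‖ := Complex.abs_re_le_norm _
      _ = p * q := by simp [p, q]
    have hb : |b| ≤ Real.sqrt a * Real.sqrt c := by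
      rw [← Real.sqrt_sq_eq_abs, ← Real.sqrt_mul ha]
      exact Real.sqrt_le_sqrt h
    have hbr : -(|b| * (p * q)) ≤ b * r := by
      have h1 : |b * r| ≤ |b| * (p * q) := by
        rw [abs_mul]; exact mul_le_mul_of_nonneg_left habs (abs_nonneg b)
      linarith [neg_abs_le (b * r), (abs_le.mp h1).1]
    have h2 : |b| * (p * q) ≤ (Real.sqrt a * Real.sqrt c) * (p * q) :=
      mul_le_mul_of_nonneg_right hb (mul_nonneg hp hq)
    have hsa := Real.sq_sqrt ha
    have hsc := Real.sq_sqrt hc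
    nlinarith [sq_nonneg (Real.sqrt a * p - Real.sqrt c * q)]

def azR (m : ℕ) [NeZero m] (l : ZMod m) : ℝ :=
  if l = 0 then -(Real.sqrt 2)⁻¹ else if l = 1 then (Real.sqrt 2)⁻¹ else 0

lemma azR_sq_le (m : ℕ) [NeZero m] (l : ZMod m) : azR m l ^ 2 ≤ 1 / 2 := by
  have h2 : (0:ℝ) < 2 := by norm_num
  have : ((Real.sqrt 2)⁻¹ : ℝ) ^ 2 = 1 / 2 := by
    rw [inv_pow, Real.sq_sqrt (by norm_num : (0:ℝ) ≤ 2)]; norm_num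
  unfold azR; split_ifs <;> simp [this] <;> norm_num

lemma azR_abs_le (m : ℕ) [NeZero m] (l : ZMod m) : |azR m l| ≤ 1 := by
  have h := azR_sq_le m l
  nlinarith [sq_abs (azR m l), abs_nonneg (azR m l)]

lemma aVec_apply0 (m : ℕ) [NeZero m] (l : ZMod m) : aVec m l 0 = 0 := by
  unfold aVec; split_ifs <;> simp [EuclideanSpace.single_apply]
lemma aVec_apply1 (m : ℕ) [NeZero m] (l : ZMod m) : aVec m l 1 = 0 := by
  unfold aVec; split_ifs <;> simp [EuclideanSpace.single_apply]
lemma aVec_apply2 (m : ℕ) [NeZero m] (l : ZMod m) : aVec m l 2 = azR m l := by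
  unfold aVec azR; split_ifs <;> simp [EuclideanSpace.single_apply]
lemma bVec_apply0 (m : ℕ) [NeZero m] (l : ZMod m) : bVec m l 0 = azR m l := by
  unfold bVec azR; split_ifs <;> simp [EuclideanSpace.single_apply]
lemma bVec_apply1 (m : ℕ) [NeZero m] (l : ZMod m) : bVec m l 1 = 0 := by
  unfold bVec; split_ifs <;> simp [EuclideanSpace.single_apply]
lemma bVec_apply2 (m : ℕ) [NeZero m] (l : ZMod m) : bVec m l 2 = 0 := by
  unfold bVec; split_ifs <;> simp [EuclideanSpace.single_apply]

lemma porecState_eq (m : ℕ) [NeZero m] (x₁ x₂ : ZMod m) :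
    porecState m x₁ x₂ =
      !![(((1 + azR m x₁)/2 : ℝ) : ℂ), ((azR m x₂ / 2 : ℝ) : ℂ);
         ((azR m x₂ / 2 : ℝ) : ℂ), (((1 - azR m x₁)/2 : ℝ) : ℂ)] := by
  unfold porecState dotSigma
  have h0 : (aVec m x₁ + bVec m x₂) 0 = azR m x₂ := by
    simp [PiLp.add_apply, aVec_apply0, bVec_apply0]
  have h1 : (aVec m x₁ + bVec m x₂) 1 = 0 := by
    simp [PiLp.add_apply, aVec_apply1, bVec_apply1]
  have h2 : (aVec m x₁ + bVec m x₂) 2 = azR m x₁ := by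
    simp [PiLp.add_apply, aVec_apply2, bVec_apply2]
  rw [h0, h1, h2]
  ext i j
  fin_cases i <;> fin_cases j <;>
    simp [sigmaX, sigmaY, sigmaZ, Matrix.one_apply, Complex.ofReal_div] <;> ring

lemma meas₁_eq (m : ℕ) [NeZero m] (b : ZMod m) :
    porecMeas₁ m b = if b = 0 then !![((1:ℝ):ℂ), ((0:ℝ):ℂ); ((0:ℝ):ℂ), ((0:ℝ):ℂ)]
      else if b = 1 then !![((0:ℝ):ℂ), ((0:ℝ):ℂ); ((0:ℝ):ℂ), ((1:ℝ):ℂ)] else 0 := by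
  unfold porecMeas₁
  split_ifs <;> (try rfl) <;>
    · ext i j
      fin_cases i <;> fin_cases j <;> simp [sigmaZ, Matrix.one_apply] <;> norm_num

lemma meas₂_eq (m : ℕ) [NeZero m] (b : ZMod m) :
    porecMeas₂ m b = if b = 0 then !![((1/2:ℝ):ℂ), ((1/2:ℝ):ℂ); ((1/2:ℝ):ℂ), ((1/2:ℝ):ℂ)]
      else if b = 1 then !![((1/2:ℝ):ℂ), ((-(1/2):ℝ):ℂ); ((-(1/2):ℝ):ℂ), ((1/2:ℝ):ℂ)] else 0 := by
  unfold porecMeas₂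
  split_ifs <;> (try rfl) <;>
    · ext i j
      fin_cases i <;> fin_cases j <;> simp [sigmaX, Matrix.one_apply] <;> norm_num

lemma sum_ite_two {α : Type*} {M : Type*} [Fintype α] [DecidableEq α] [AddCommMonoid M]
    (u v : α) (huv : u ≠ v) (A B : M) :
    ∑ x : α, (if x = u then A else if x = v then B else 0) = A + B := by
  have hfun : ∀ x : α, (if x = u then A else if x = v then B else 0)
      = (if x = u then A else 0) + (if x = v then B else 0) := by
    intro x
    by_cases h1 : x = u
    · subst h1; simp [huv]
    · simp [h1]
  rw [Finset.sum_congr rfl (fun x _ => hfun x), Finset.sum_add_distrib]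
  simp

-- PSD of state
lemma porecState_psd (m : ℕ) [NeZero m] (x₁ x₂ : ZMod m) : (porecState m x₁ x₂).PosSemidef := by
  rw [porecState_eq]
  apply psd2
  · have := azR_abs_le m x₁; have := abs_le.mp this; linarith [this.1]
  · have := azR_abs_le m x₁; have := abs_le.mp this; linarith [this.2]
  · have h1 := azR_sq_le m x₁
    have h2 := azR_sq_le m x₂
    nlinarith [sq_nonneg (azR m x₁), sq_nonneg (azR m x₂)]

lemma porecState_trace (m : ℕ) [NeZero m] (x₁ x₂ : ZMod m) : (porecState m x₁ x₂).trace = 1 := by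
  rw [porecState_eq]
  simp [Matrix.trace, Fin.sum_univ_two, Matrix.diag]
  push_cast
  ring

lemma zero_ne_one_zmod (m : ℕ) (hm3 : 3 ≤ m) [NeZero m] : (0 : ZMod m) ≠ 1 := by
  haveI : Fact (1 < m) := ⟨by omega⟩
  exact zero_ne_one

lemma meas₁_psd (m : ℕ) [NeZero m] (b : ZMod m) : (porecMeas₁ m b).PosSemidef := by
  rw [meas₁_eq]
  split_ifs
  · exact psd2 1 0 0 (by norm_num) (by norm_num) (by norm_num)
  · exact psd2 0 0 1 (by norm_num) (by norm_num) (by norm_num)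
  · exact Matrix.PosSemidef.zero

lemma meas₂_psd (m : ℕ) [NeZero m] (b : ZMod m) : (porecMeas₂ m b).PosSemidef := by
  rw [meas₂_eq]
  split_ifs
  · exact psd2 (1/2) (1/2) (1/2) (by norm_num) (by norm_num) (by norm_num)
  · exact psd2 (1/2) (-(1/2)) (1/2) (by norm_num) (by norm_num) (by norm_num)
  · exact Matrix.PosSemidef.zero

lemma meas₁_sum (m : ℕ) (hm3 : 3 ≤ m) [NeZero m] : ∑ b : ZMod m, porecMeas₁ m b = 1 := by
  haveI : Fact (1 < m) := ⟨by omega⟩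
  unfold porecMeas₁
  rw [sum_ite_two (0 : ZMod m) 1 (zero_ne_one_zmod m hm3) _ _]
  ext i j
  fin_cases i <;> fin_cases j <;> simp [sigmaZ, Matrix.one_apply] <;> norm_num

lemma meas₂_sum (m : ℕ) (hm3 : 3 ≤ m) [NeZero m] : ∑ b : ZMod m, porecMeas₂ m b = 1 := by
  haveI : Fact (1 < m) := ⟨by omega⟩
  unfold porecMeas₂
  rw [sum_ite_two (0 : ZMod m) 1 (zero_ne_one_zmod m hm3) _ _]
  ext i j
  fin_cases i <;> fin_cases j <;> simp [sigmaX, Matrix.one_apply] <;> norm_num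

lemma azR_sum (m : ℕ) (hm3 : 3 ≤ m) [NeZero m] : ∑ l : ZMod m, azR m l = 0 := by
  unfold azR
  rw [sum_ite_two (0 : ZMod m) 1 (zero_ne_one_zmod m hm3) _ _]
  ring

lemma line_sum (m : ℕ) (hm : Nat.Prime m) (hm3 : 3 ≤ m) [NeZero m]
    (r₁ r₂ : ZMod m) (h₁ : r₁ ≠ 0) (h₂ : r₂ ≠ 0) (k : ZMod m) :
    ∑ x ∈ Finset.univ.filter (fun x : ZMod m × ZMod m => r₁ * x.1 + r₂ * x.2 = k),
        porecState m x.1 x.2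
      = !![(((m : ℝ)/2 : ℝ) : ℂ), 0; 0, (((m : ℝ)/2 : ℝ) : ℂ)] := by
  haveI : Fact (Nat.Prime m) := ⟨hm⟩
  set φ : ZMod m → ZMod m := fun x₁ => r₂⁻¹ * (k - r₁ * x₁) with hφ
  have hr₂ : r₂⁻¹ * r₂ = 1 := inv_mul_cancel₀ h₂
  have hbij : Function.Bijective φ := by
    rw [Fintype.bijective_iff_injective_and_card]
    refine ⟨fun x y hxy => ?_, rfl⟩
    simp only [hφ] at hxy
    have h₂' : r₂⁻¹ ≠ 0 := inv_ne_zero h₂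
    have h3 : k - r₁ * x = k - r₁ * y := mul_left_cancel₀ h₂' hxy
    have h4 : r₁ * x = r₁ * y := by
      linear_combination -h3
    exact mul_left_cancel₀ h₁ h4
  have step1 : ∑ x ∈ Finset.univ.filter
        (fun x : ZMod m × ZMod m => r₁ * x.1 + r₂ * x.2 = k), porecState m x.1 x.2
      = ∑ x₁ : ZMod m, porecState m x₁ (φ x₁) := by
    apply Finset.sum_nbij' (fun x => x.1) (fun x₁ => (x₁, φ x₁))
    · intro a ha; exact Finset.mem_univ _
    · intro a ha
      simp only [Finset.mem_filter, Finset.mem_univ, true_and, hφ]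
      rw [← mul_assoc, mul_inv_cancel₀ h₂, one_mul]; ring
    · intro a ha
      simp only [Finset.mem_filter, Finset.mem_univ, true_and] at ha
      have ha2 : a.2 = φ a.1 := by
        have h5 : r₂ * a.2 = k - r₁ * a.1 := by rw [← ha]; ring
        simp only [hφ]
        rw [← h5, ← mul_assoc, hr₂, one_mul]
      ext
      · rfl
      · exact ha2.symm
    · intro a ha; rfl
    · intro a ha
      simp only [Finset.mem_filter, Finset.mem_univ, true_and] at ha
      have ha2 : a.2 = φ a.1 := by
        have h5 : r₂ * a.2 = k - r₁ * a.1 := by rw [← ha]; ring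
        simp only [hφ]
        rw [← h5, ← mul_assoc, hr₂, one_mul]
      rw [ha2]
  rw [step1]
  have haz := azR_sum m hm3
  have hazφ : ∑ x₁ : ZMod m, azR m (φ x₁) = 0 := by
    rw [Fintype.sum_bijective φ hbij _ _ (fun x => rfl)]
    exact haz
  have hcard : (Finset.univ : Finset (ZMod m)).card = m := by
    simp [ZMod.card]
  have hsum1 : ∑ x : ZMod m, (1 + azR m x)/2 = (m : ℝ)/2 := by
    rw [← Finset.sum_div, Finset.sum_add_distrib, haz, Finset.sum_const, hcard]
    simp
  have hsum2 : ∑ x : ZMod m, azR m (φ x) / 2 = 0 := by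
    rw [← Finset.sum_div, hazφ]; simp
  have hsum3 : ∑ x : ZMod m, (1 - azR m x)/2 = (m : ℝ)/2 := by
    rw [← Finset.sum_div, Finset.sum_sub_distrib, haz, Finset.sum_const, hcard]
    simp
  simp only [porecState_eq]
  ext i j
  fin_cases i <;> fin_cases j
  · simp [Matrix.sum_apply]; have := congrArg Complex.ofReal hsum1; push_cast at this ⊢; rw [this]
  · simp [Matrix.sum_apply]; have := congrArg Complex.ofReal hsum2; push_cast at this; exact this
  · simp [Matrix.sum_apply]; have := congrArg Complex.ofReal hsum2; push_cast at this; exact this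
  · simp [Matrix.sum_apply]; have := congrArg Complex.ofReal hsum3; push_cast at this ⊢; rw [this]

lemma trace₁_re (m : ℕ) [NeZero m] (x₁ x₂ b : ZMod m) :
    ((porecState m x₁ x₂ * porecMeas₁ m b).trace).re
      = if b = 0 then (1 + azR m x₁)/2 else if b = 1 then (1 - azR m x₁)/2 else 0 := by
  rw [porecState_eq, meas₁_eq]
  split_ifs <;>
    simp [Matrix.trace, Matrix.mul_apply, Fin.sum_univ_two, Matrix.diag,
      Complex.add_re, Complex.mul_re]

lemma trace₂_re (m : ℕ) [NeZero m] (x₁ x₂ b : ZMod m) :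
    ((porecState m x₁ x₂ * porecMeas₂ m b).trace).re
      = if b = 0 then (1 + azR m x₂)/2 else if b = 1 then (1 - azR m x₂)/2 else 0 := by
  rw [porecState_eq, meas₂_eq]
  split_ifs <;>
    (simp [Matrix.trace, Matrix.mul_apply, Fin.sum_univ_two, Matrix.diag,
      Complex.add_re, Complex.mul_re]; try ring)

-- the exclusion sum for a single question
lemma excl_sum (m : ℕ) (hm3 : 3 ≤ m) [NeZero m] (t : ZMod m) (v : ZMod m → ℝ)
    (f : ZMod m → ℝ)
    (hf : ∀ b, f b = if b = 0 then (1 + v 0)/2 else if b = 1 then (1 - v 1)/2 else 0) :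
    ∑ b ∈ Finset.univ.filter (fun b => b ≠ t), f b
      = (1 + v 0)/2 + (1 - v 1)/2 - f t := by
  have h01 := zero_ne_one_zmod m hm3
  rw [Finset.filter_ne', Finset.sum_erase_eq_sub (Finset.mem_univ t)]
  congr 1
  rw [Finset.sum_congr rfl (fun b _ => hf b), sum_ite_two (0 : ZMod m) 1 h01 _ _]

/-- **Achievability of the projective qubit bound for the (2,m) POREC.** For every prime
`m ≥ 3`, the explicit strategy built from the zero-sum Bloch families `a`, `b` and
complementary Pauli measurements is a valid, fully parity-oblivious qubit strategy with
two-outcome projective measurements achieving POREC success probability exactly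
`(m−1)/m + 1/(m√2)`. -/
theorem porec2m_projective_qubit_optimal_strategy
    (m : ℕ) (hm : Nat.Prime m) (hm3 : 3 ≤ m) [NeZero m] :
    (∀ x₁ x₂ : ZMod m,
      (porecState m x₁ x₂).PosSemidef ∧ (porecState m x₁ x₂).trace = 1) ∧
    (∀ b : ZMod m, (porecMeas₁ m b).PosSemidef) ∧ (∑ b : ZMod m, porecMeas₁ m b = 1) ∧
    (∀ b : ZMod m, (porecMeas₂ m b).PosSemidef) ∧ (∑ b : ZMod m, porecMeas₂ m b = 1) ∧
    (∀ r₁ r₂ : ZMod m, r₁ ≠ 0 → r₂ ≠ 0 → ∀ k k' : ZMod m,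
      ∑ x ∈ Finset.univ.filter (fun x : ZMod m × ZMod m => r₁ * x.1 + r₂ * x.2 = k),
        porecState m x.1 x.2 =
      ∑ x ∈ Finset.univ.filter (fun x : ZMod m × ZMod m => r₁ * x.1 + r₂ * x.2 = k'),
        porecState m x.1 x.2) ∧
    (1 / (2 * (m : ℝ) ^ 2)) *
        ∑ x : ZMod m × ZMod m,
          ((∑ b ∈ Finset.univ.filter (fun b => b ≠ x.1),
              ((porecState m x.1 x.2 * porecMeas₁ m b).trace).re) +
           (∑ b ∈ Finset.univ.filter (fun b => b ≠ x.2),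
              ((porecState m x.1 x.2 * porecMeas₂ m b).trace).re))
      = ((m : ℝ) - 1) / m + 1 / (m * Real.sqrt 2) := by
  refine ⟨fun x₁ x₂ => ⟨porecState_psd m x₁ x₂, porecState_trace m x₁ x₂⟩,
    meas₁_psd m, meas₁_sum m hm3, meas₂_psd m, meas₂_sum m hm3,
    fun r₁ r₂ h₁ h₂ k k' => by
      rw [line_sum m hm hm3 r₁ r₂ h₁ h₂ k, line_sum m hm hm3 r₁ r₂ h₁ h₂ k'], ?_⟩
  set s : ℝ := (Real.sqrt 2)⁻¹ with hs
  set q : ZMod m → ℝ := fun l => if l = 0 then (1 - s)/2 else if l = 1 then (1 - s)/2 else 0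
    with hq
  have key₁ : ∀ x : ZMod m × ZMod m,
      (∑ b ∈ Finset.univ.filter (fun b => b ≠ x.1),
        ((porecState m x.1 x.2 * porecMeas₁ m b).trace).re) = 1 - q x.1 := by
    intro x
    rw [excl_sum m hm3 x.1 (fun _ => azR m x.1) _ (fun b => trace₁_re m x.1 x.2 b)]
    rw [trace₁_re]
    simp only [hq]
    unfold azR
    split_ifs <;> ring
  have key₂ : ∀ x : ZMod m × ZMod m,
      (∑ b ∈ Finset.univ.filter (fun b => b ≠ x.2),
        ((porecState m x.1 x.2 * porecMeas₂ m b).trace).re) = 1 - q x.2 := by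
    intro x
    rw [excl_sum m hm3 x.2 (fun _ => azR m x.2) _ (fun b => trace₂_re m x.1 x.2 b)]
    rw [trace₂_re]
    simp only [hq]
    unfold azR
    split_ifs <;> ring
  rw [Finset.sum_congr rfl (fun x _ => by rw [key₁ x, key₂ x])]
  have hcard : (Finset.univ : Finset (ZMod m)).card = m := by simp [ZMod.card]
  have hQ : ∑ l : ZMod m, q l = 1 - s := by
    simp only [hq]
    rw [sum_ite_two (0 : ZMod m) 1 (zero_ne_one_zmod m hm3) _ _]
    ring
  have htot : ∑ x : ZMod m × ZMod m, ((1 - q x.1) + (1 - q x.2)) = 2*(m:ℝ)*((m:ℝ) - 1 + s) := by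
    rw [Fintype.sum_prod_type]
    have inner : ∀ x₁ : ZMod m, ∑ x₂ : ZMod m, ((1 - q x₁) + (1 - q x₂))
        = (m : ℝ) * (1 - q x₁) + ((m : ℝ) - (1 - s)) := by
      intro x₁
      rw [Finset.sum_add_distrib, Finset.sum_const, hcard, Finset.sum_sub_distrib,
        Finset.sum_const, hcard, hQ]
      simp [nsmul_eq_mul]
      try ring
    rw [Finset.sum_congr rfl (fun x₁ _ => inner x₁), Finset.sum_add_distrib,
      Finset.sum_const, hcard, ← Finset.mul_sum, Finset.sum_sub_distrib,
      Finset.sum_const, hcard, hQ]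
    simp [nsmul_eq_mul]
    try ring
  rw [htot]
  have hm0 : (m : ℝ) ≠ 0 := by
    have : (0:ℝ) < m := by exact_mod_cast Nat.lt_of_lt_of_le (by norm_num) hm3
    linarith
  have hsqrt : Real.sqrt 2 ≠ 0 := by positivity
  rw [hs]
  field_simp

end
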